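/- In a CFG, if a node v is cycle-inducing then there exists a cycle that contains v but does not contain fppd(v). -/

import Mathlib

namespace Slicing

/-- A path is a nonempty list of nodes, consecutive ones related by `succ`,
starting at `v` and ending at `v'`. -/
def IsPath {V : Type} (succ : V → V → Prop) (p : List V) (v v' : V) : Prop :=
  p.Chain' succ ∧ p.head? = some v ∧ p.getLast? = some v'

/-- A control-flow graph: an edge relation and an `End` node with no successors,
reachable from every node. -/
structure CFG (V : Type) where
  succ : V → V → Prop
  End : V
  end_no_succ : ∀ w, ¬ succ End w
  reach_end : ∀ v, ∃ p, IsPath succ p v End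

variable {V : Type}

/-- `v1` postdominates `v`. -/
def PD (G : CFG V) (v v1 : V) : Prop :=
  ∀ p, IsPath G.succ p v G.End → v1 ∈ p

/-- `v1` is a proper postdominator of `v`. -/
def ProperPD (G : CFG V) (v v1 : V) : Prop :=
  PD G v v1 ∧ v1 ≠ v

/-- `v1` is a first proper postdominator of `v`: every path from `v` to any other
proper postdominator of `v` contains `v1`. -/
def IsFPPD (G : CFG V) (v v1 : V) : Prop :=
  ProperPD G v v1 ∧
    ∀ v2, ProperPD G v v2 → v2 ≠ v1 → ∀ p, IsPath G.succ p v v2 → v1 ∈ p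

/-- Maximum number of edges of an acyclic path from `v` to `v'`. -/
noncomputable def LAP (G : CFG V) (v v' : V) : ℕ :=
  sSup {n | ∃ p, IsPath G.succ p v v' ∧ p.Nodup ∧ p.length = n + 1}

/-- A node is cycle-inducing if, with `v'` its first proper postdominator,
some successor `vi` of `v` satisfies `LAP vi v' ≥ LAP v v'`. -/
def CycleInducing (G : CFG V) (v : V) : Prop :=
  ∃ v', IsFPPD G v v' ∧ ∃ vi, G.succ v vi ∧ LAP G v v' ≤ LAP G vi v'

/-- `v` stays outside `Q` until `v'`: every path from `v` to `v'` in which `v'`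
occurs only at the final position contains no node of `Q` except possibly `v'`. -/
def StaysOutside (G : CFG V) (Q : Set V) (v v' : V) : Prop :=
  ∀ p, IsPath G.succ p v v' → v' ∉ p.dropLast → ∀ w ∈ p, w ∈ Q → w = v'

/-- `v2` is data dependent on `v1`. -/
def DataDep {Var : Type} (G : CFG V) (Def Use : V → Set Var) (v1 v2 : V) : Prop :=
  ∃ x, x ∈ Use v2 ∧ x ∈ Def v1 ∧
    ∃ p, IsPath G.succ p v1 v2 ∧ 2 ≤ p.length ∧ ∀ w ∈ p.tail.dropLast, x ∉ Def w

/-- `Q` is closed under data dependence. -/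
def ClosedDD {Var : Type} (G : CFG V) (Def Use : V → Set Var) (Q : Set V) : Prop :=
  ∀ v1 v2, v2 ∈ Q → DataDep G Def Use v1 v2 → v1 ∈ Q

/-- The `Q`-relevant variables at `v`. -/
def rv {Var : Type} (G : CFG V) (Def Use : V → Set Var) (Q : Set V) (v : V) : Set Var :=
  {x | ∃ v' ∈ Q, x ∈ Use v' ∧
    ∃ p, IsPath G.succ p v v' ∧ p.Nodup ∧ ∀ w ∈ p, w ≠ v' → x ∉ Def w}

/-- `v'` is a next visible in `Q` of `v`. -/
def IsNextVisible (G : CFG V) (Q : Set V) (v v' : V) : Prop :=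
  (v' ∈ Q ∨ v' = G.End) ∧
    ∀ u, (u ∈ Q ∨ u = G.End) → ∀ p, IsPath G.succ p v u → v' ∈ p

/-- `Q` provides next visibles. -/
def ProvidesNextVisibles (G : CFG V) (Q : Set V) : Prop :=
  ∀ v, ∃ v', IsNextVisible G Q v v'

/-- A weak slice set provides next visibles and is closed under data dependence. -/
def WeakSliceSet {Var : Type} (G : CFG V) (Def Use : V → Set Var) (Q : Set V) : Prop :=
  ProvidesNextVisibles G Q ∧ ClosedDD G Def Use Q

end Slicing

namespace Slicing

lemma IsPath.ne_nil {V : Type} {succ : V → V → Prop} {p : List V} {v v' : V} (h : IsPath succ p v v') : p ≠ [] := by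
  intro hp; rw [hp] at h; simp [IsPath] at h

lemma not_nodup_split {V : Type} {p : List V} (h : ¬ p.Nodup) :
    ∃ (a : V) (s t u : List V), p = s ++ a :: t ++ a :: u := by
  induction p with
  | nil => simp at h
  | cons b rest ih =>
    by_cases hb : b ∈ rest
    · obtain ⟨t, u, rfl⟩ := List.append_of_mem hb
      exact ⟨b, [], t, u, rfl⟩
    · have : ¬ rest.Nodup := fun hr => h (List.nodup_cons.mpr ⟨hb, hr⟩)
      obtain ⟨a, s, t, u, rfl⟩ := ih this
      exact ⟨a, b :: s, t, u, rfl⟩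

lemma path_splice {V : Type} {succ : V → V → Prop} {s t u : List V} {a v v' : V}
    (h : IsPath succ (s ++ a :: t ++ a :: u) v v') : IsPath succ (s ++ a :: u) v v' := by
  obtain ⟨hc, hh, hl⟩ := h
  change List.IsChain _ _ at hc
  rw [List.isChain_append] at hc
  obtain ⟨h1, h2, _⟩ := hc
  rw [List.isChain_append] at h1
  refine ⟨?_, ?_, ?_⟩
  · show List.IsChain _ _
    rw [List.isChain_append]
    refine ⟨h1.1, h2, fun x hx y hy => ?_⟩
    simp only [List.head?_cons, Option.mem_def, Option.some.injEq] at hy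
    subst hy
    exact h1.2.2 x hx a (by simp)
  · rw [List.head?_append, List.head?_append] at hh
    rw [List.head?_append]
    cases s <;> simpa using hh
  · rw [List.getLast?_append] at hl ⊢
    rcases Option.isSome_iff_exists.mp
      (List.getLast?_isSome.mpr (by simp) : (a :: u).getLast?.isSome) with ⟨b, hb⟩
    rw [hb] at hl ⊢
    simpa using hl

lemma exists_nodup_path {V : Type} {succ : V → V → Prop} {p : List V} {v v' : V} (h : IsPath succ p v v') :
    ∃ q, IsPath succ q v v' ∧ q.Nodup := by
  suffices H : ∀ n (p : List V), p.length ≤ n → IsPath succ p v v' →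
      ∃ q, IsPath succ q v v' ∧ q.Nodup from H p.length p le_rfl h
  intro n
  induction n with
  | zero =>
    intro p hp h
    exact absurd (List.length_eq_zero_iff.mp (Nat.le_zero.mp hp)) h.ne_nil
  | succ n ih =>
    intro p hp h
    by_cases hnd : p.Nodup
    · exact ⟨p, h, hnd⟩
    · obtain ⟨a, s, t, u, rfl⟩ := not_nodup_split hnd
      refine ih _ ?_ (path_splice h)
      simp only [List.length_append, List.length_cons] at hp ⊢
      omega

lemma path_prefix {V : Type} {succ : V → V → Prop} {s t : List V} {a v v' : V}
    (h : IsPath succ (s ++ a :: t) v v') : IsPath succ (s ++ [a]) v a := by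
  obtain ⟨hc, hh, _⟩ := h
  refine ⟨hc.prefix ⟨t, by simp⟩, ?_, List.getLast?_concat⟩
  rw [List.head?_append] at hh ⊢
  cases s <;> simpa using hh

lemma path_cons {V : Type} {succ : V → V → Prop} {p : List V} {v w v' : V} (hs : succ v w) (h : IsPath succ p w v') :
    IsPath succ (v :: p) v v' := by
  obtain ⟨hc, hh, hl⟩ := h
  refine ⟨List.isChain_cons.mpr ⟨fun y hy => ?_, hc⟩, rfl, ?_⟩
  · rw [hh] at hy; cases hy; exact hs
  · rw [show (v :: p) = [v] ++ p from rfl, List.getLast?_append, hl]; rfl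


/-- If `v` is cycle-inducing (witnessed by its first proper postdominator `v'` and a
successor `vi` with `LAP vi v' ≥ LAP v v'`), then there is a cycle containing `v`
but not `v'`. -/
theorem cycle_inducing_gives_cycle {V : Type} [Fintype V] (G : CFG V)
    (v v' vi : V) (hf : IsFPPD G v v')
    (hsucc : G.succ v vi) (hlap : LAP G v v' ≤ LAP G vi v') :
    ∃ u p, IsPath G.succ p u u ∧ 2 ≤ p.length ∧ v ∈ p ∧ v' ∉ p := by
  obtain ⟨⟨hpd, hne⟩, -⟩ := hf
  have hbdd : ∀ w : V, BddAbove {n | ∃ p, IsPath G.succ p w v' ∧ p.Nodup ∧ p.length = n + 1} := by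
    intro w
    refine ⟨Fintype.card V, fun n hn => ?_⟩
    obtain ⟨p, -, hnd, hlen⟩ := hn
    have := hnd.length_le_card
    omega
  -- a nodup path from vi to v'
  obtain ⟨p0, hp0⟩ := G.reach_end vi
  have hv'p0 : v' ∈ p0 := by
    have := hpd _ (path_cons hsucc hp0)
    rcases List.mem_cons.mp this with h | h
    · exact absurd h hne
    · exact h
  obtain ⟨s, t, rfl⟩ := List.append_of_mem hv'p0
  obtain ⟨q0, hq0, hq0nd⟩ := exists_nodup_path (path_prefix hp0)
  have hq0len : q0.length = (q0.length - 1) + 1 :=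
    (Nat.succ_pred_eq_of_pos (List.length_pos_iff.mpr hq0.ne_nil)).symm
  have hmem : LAP G vi v' ∈ {n | ∃ p, IsPath G.succ p vi v' ∧ p.Nodup ∧ p.length = n + 1} :=
    Nat.sSup_mem ⟨q0.length - 1, q0, hq0, hq0nd, hq0len⟩ (hbdd vi)
  obtain ⟨q, hq, hqnd, hqlen⟩ := hmem
  by_cases hv : v ∈ q
  · obtain ⟨s1, t1, rfl⟩ := List.append_of_mem hv
    have ht1 : t1 ≠ [] := by
      rintro rfl
      have h2 := hq.2.2
      rw [List.getLast?_concat] at h2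
      exact hne (Option.some.inj h2).symm
    have hr : IsPath G.succ (s1 ++ [v]) vi v := path_prefix hq
    refine ⟨v, v :: (s1 ++ [v]), path_cons hsucc hr, by simp, by simp, ?_⟩
    have hv't1 : v' ∈ t1 := by
      have hgl := hq.2.2
      rw [List.getLast?_append] at hgl
      rcases Option.isSome_iff_exists.mp (List.getLast?_isSome.mpr ht1) with ⟨b, hb⟩
      rw [show (v :: t1).getLast? = t1.getLast?.or (some v) by
        rw [show (v :: t1) = [v] ++ t1 from rfl, List.getLast?_append]; rfl, hb] at hgl
      simp only [Option.or_some, Option.getD_some, Option.some_or, Option.some.injEq] at hgl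
      subst hgl
      exact List.mem_of_mem_getLast? (hb ▸ rfl)
    have hdisj : (s1 ++ [v]).Disjoint t1 := by
      have : ((s1 ++ [v]) ++ t1).Nodup := by simpa using hqnd
      exact (List.nodup_append'.mp this).2.2
    intro hmem'
    rcases List.mem_cons.mp hmem' with h | h
    · exact hne h
    · exact hdisj h hv't1
  · exfalso
    have hvq : IsPath G.succ (v :: q) v v' := path_cons hsucc hq
    have hin : LAP G vi v' + 1 ∈
        {n | ∃ p, IsPath G.succ p v v' ∧ p.Nodup ∧ p.length = n + 1} :=
      ⟨v :: q, hvq, List.nodup_cons.mpr ⟨hv, hqnd⟩, by simp [hqlen]⟩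
    have := le_csSup (hbdd v) hin
    have : LAP G vi v' + 1 ≤ LAP G v v' := this
    omega


end Slicing
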